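/- For all complex-valued multiplicative characters A, B, B', C, C' of a finite field F_q with q elements and all y ∈ F_q, one has F₂(A;B,B';C,C';1,y) = (BC)(-1)·₃F₂(A, B', AC̄; C', ABC̄ | y). -/

import Mathlib

open Finset

noncomputable instance {F : Type*} [Field F] [Fintype F] : Fintype (MulChar F ℂ) :=
  Fintype.ofFinite _

/-- Finite-field binomial coefficient `{A choose B} = B(-1) · J(A, B̄)`,
where `J(χ,λ) = ∑_u χ(u)·λ(1-u)` is the Jacobi sum. -/
noncomputable def binom {F : Type*} [Field F] [Fintype F] (A B : MulChar F ℂ) : ℂ :=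
  B (-1) * ∑ u : F, A u * B⁻¹ (1 - u)

/-- Finite-field Gauss hypergeometric series
`₂F₁(A,B;C|x) = ε(x)·(BC)(-1)·∑_y B(y)·(B̄C)(1-y)·Ā(1-xy)`. -/
noncomputable def gauss2F1 {F : Type*} [Field F] [Fintype F]
    (A B C : MulChar F ℂ) (x : F) : ℂ :=
  (1 : MulChar F ℂ) x * (B * C) (-1) *
    ∑ y : F, B y * (B⁻¹ * C) (1 - y) * A⁻¹ (1 - x * y)

/-- Finite-field `₃F₂` hypergeometric series. -/
noncomputable def hyper3F2 {F : Type*} [Field F] [Fintype F]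
    (A₀ A₁ A₂ B₁ B₂ : MulChar F ℂ) (x : F) : ℂ :=
  ((Fintype.card F : ℂ) - 1)⁻¹ *
    ∑ χ : MulChar F ℂ,
      binom (A₀ * χ) χ * binom (A₁ * χ) (B₁ * χ) * binom (A₂ * χ) (B₂ * χ) * χ x

/-- Finite-field Appell series
`F₂(A;B,B';C,C';x,y) = ε(xy)·(BB'CC')(-1)·∑_{u,v} B(u)B'(v)(B̄C)(1-u)(B̄'C')(1-v)·Ā(1-ux-vy)`. -/
noncomputable def appellF2 {F : Type*} [Field F] [Fintype F]
    (A B B' C C' : MulChar F ℂ) (x y : F) : ℂ :=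
  (1 : MulChar F ℂ) (x * y) * (B * B' * C * C') (-1) *
    ∑ u : F, ∑ v : F,
      B u * B' v * (B⁻¹ * C) (1 - u) * (B'⁻¹ * C') (1 - v) * A⁻¹ (1 - u * x - v * y)

open scoped Classical in
/-- `δ(x) = 1` if `x = 0`, and `0` otherwise. -/
noncomputable def deltaF {F : Type*} [Field F] (x : F) : ℂ :=
  if x = 0 then 1 else 0

open scoped Classical in
/-- `δ(χ) = 1` if `χ = ε` (the trivial character), and `0` otherwise. -/
noncomputable def deltaChar {F : Type*} [Field F] [Fintype F] (χ : MulChar F ℂ) : ℂ :=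
  if χ = 1 then 1 else 0

section Aux

variable {F : Type*} [Field F] [Fintype F]

open scoped Classical in
private lemma sum_char_apply (a : F) :
    ∑ χ : MulChar F ℂ, χ a = if a = 1 then ((Fintype.card F : ℂ) - 1) else 0 := by
  have hexp : NeZero ((Monoid.exponent Fˣ : ℕ) : ℂ) :=
    ⟨Nat.cast_ne_zero.mpr Monoid.exponent_ne_zero_of_finite⟩
  split_ifs with ha
  · subst ha
    simp only [map_one, Finset.sum_const, Finset.card_univ, nsmul_eq_mul, mul_one]
    have h1 : Fintype.card (MulChar F ℂ) = Fintype.card F - 1 := by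
      rw [← Nat.card_eq_fintype_card,
        MulChar.card_eq_card_units_of_hasEnoughRootsOfUnity F ℂ,
        Nat.card_eq_fintype_card, Fintype.card_units]
    rw [h1, Nat.cast_sub Fintype.card_pos, Nat.cast_one]
  · by_cases hu : IsUnit a
    · obtain ⟨χ₀, hχ₀⟩ := MulChar.exists_apply_ne_one_of_hasEnoughRootsOfUnity F ℂ ha
      refine eq_zero_of_mul_eq_self_left hχ₀ ?_
      simp only [Finset.mul_sum, ← MulChar.mul_apply]
      exact Fintype.sum_bijective _ (Group.mulLeft_bijective χ₀) _ _ fun χ' ↦ rfl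
    · simp [MulChar.map_nonunit _ hu]

private lemma jacobi_comm (α β : MulChar F ℂ) :
    ∑ u : F, α u * β (1 - u) = ∑ u : F, β u * α (1 - u) := by
  refine Fintype.sum_equiv (Equiv.subLeft 1) _ _ fun u ↦ ?_
  simp [Equiv.subLeft, mul_comm]

private lemma jacobi_refl (α β : MulChar F ℂ) :
    ∑ u : F, α u * β (1 - u) = α (-1) * ∑ u : F, α u * (α * β)⁻¹ (1 - u) := by
  rw [Finset.mul_sum]
  classical
  rw [← Finset.sum_erase (univ : Finset F) (a := (1:F)) (f := fun u => α u * β (1-u))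
      (by simp [MulChar.map_zero])]
  rw [← Finset.sum_erase (univ : Finset F) (a := (1:F))
      (f := fun u => α (-1) * (α u * (α * β)⁻¹ (1-u))) (by simp [MulChar.map_zero])]
  refine Finset.sum_nbij' (i := fun t => t / (t - 1)) (j := fun t => t / (t - 1))
    ?_ ?_ ?_ ?_ ?_
  · intro t ht
    simp only [mem_erase, mem_univ, and_true] at ht ⊢
    intro h
    have h1 : t - 1 ≠ 0 := sub_ne_zero.mpr ht
    field_simp at h
    exact one_ne_zero (by linear_combination h)
  · intro t ht
    simp only [mem_erase, mem_univ, and_true] at ht ⊢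
    intro h
    have h1 : t - 1 ≠ 0 := sub_ne_zero.mpr ht
    field_simp at h
    exact one_ne_zero (by linear_combination h)
  · intro t ht
    simp only [mem_erase, mem_univ, and_true] at ht
    have h1 : t - 1 ≠ 0 := sub_ne_zero.mpr ht
    field_simp; ring
  · intro t ht
    simp only [mem_erase, mem_univ, and_true] at ht
    have h1 : t - 1 ≠ 0 := sub_ne_zero.mpr ht
    field_simp; ring
  · intro t ht
    simp only [mem_erase, mem_univ, and_true] at ht
    have h1 : t - 1 ≠ 0 := sub_ne_zero.mpr ht
    have h2 : (1:F) - t ≠ 0 := sub_ne_zero.mpr (Ne.symm ht)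
    have e1 : (1:F) - t / (t - 1) = (1 - t)⁻¹ := by field_simp; ring
    have e2 : t / (t - 1) = t * (-1 * (1 - t)⁻¹) := by field_simp; ring
    have hα : α ((1 - t)⁻¹) * α (1 - t) = 1 := by
      rw [← map_mul, inv_mul_cancel₀ h2, map_one]
    have hneg : α (-1) * α (-1) = 1 := by
      rw [← map_mul]; norm_num
    have hA : α (t / (t - 1)) = α t * α (-1) * α ((1 - t)⁻¹) := by
      rw [e2, map_mul, map_mul]; ring
    have hB : (α * β)⁻¹ (1 - t / (t - 1)) = α (1 - t) * β (1 - t) := by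
      rw [e1, MulChar.inv_apply', inv_inv, MulChar.mul_apply]
    beta_reduce
    rw [hA, hB]
    linear_combination (-(α t * β (1 - t)) * α ((1 - t)⁻¹) * α (1 - t)) * hneg
      - α t * β (1 - t) * hα

private lemma greene (A : MulChar F ℂ) (z : F) :
    A⁻¹ (1 - z) = deltaF z +
      ((Fintype.card F : ℂ) - 1)⁻¹ * ∑ χ : MulChar F ℂ, binom (A * χ) χ * χ z := by
  classical
  have hq1 : (1:ℕ) < Fintype.card F := Fintype.one_lt_card
  have hq : ((Fintype.card F : ℂ) - 1) ≠ 0 := by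
    rw [sub_ne_zero]
    exact_mod_cast Nat.ne_of_gt hq1
  have key : ∑ χ : MulChar F ℂ, binom (A * χ) χ * χ z
      = ((Fintype.card F : ℂ) - 1) * (A⁻¹ (1 - z) - deltaF z) := by
    have step1 : ∀ χ : MulChar F ℂ, binom (A * χ) χ * χ z
        = ∑ s : F, A s * χ ((-1) * (s * ((1 - s)⁻¹ * z))) := by
      intro χ
      simp only [binom, MulChar.mul_apply, MulChar.inv_apply', Finset.mul_sum,
        Finset.sum_mul, map_mul]
      exact Finset.sum_congr rfl fun s _ => by ring
    calc ∑ χ : MulChar F ℂ, binom (A * χ) χ * χ z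
        = ∑ χ : MulChar F ℂ, ∑ s : F, A s * χ ((-1) * (s * ((1 - s)⁻¹ * z))) :=
          Finset.sum_congr rfl fun χ _ => step1 χ
      _ = ∑ s : F, ∑ χ : MulChar F ℂ, A s * χ ((-1) * (s * ((1 - s)⁻¹ * z))) :=
          Finset.sum_comm
      _ = ∑ s : F, A s *
            (if (-1) * (s * ((1 - s)⁻¹ * z)) = 1 then ((Fintype.card F : ℂ) - 1) else 0) := by
          simp_rw [← Finset.mul_sum, sum_char_apply]
      _ = ((Fintype.card F : ℂ) - 1) * (A⁻¹ (1 - z) - deltaF z) := by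
          by_cases hz1 : z = 1
          · subst hz1
            rw [Finset.sum_eq_zero, deltaF, if_neg one_ne_zero]
            · simp [MulChar.map_zero]
            · intro s _
              rw [if_neg, mul_zero]
              intro h
              by_cases hs : s = 1
              · rw [hs] at h; simp at h
              · have h1 : (1:F) - s ≠ 0 := sub_ne_zero.mpr (Ne.symm hs)
                field_simp at h
                exact absurd (by linear_combination -h : (1:F) = 0) one_ne_zero
          · by_cases hz0 : z = 0
            · subst hz0
              rw [Finset.sum_eq_zero, deltaF, if_pos rfl]
              · simp
              · intro s _
                rw [if_neg, mul_zero]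
                simp
            · have hz : (1:F) - z ≠ 0 := sub_ne_zero.mpr (Ne.symm hz1)
              have hcond : ∀ s : F, ((-1) * (s * ((1 - s)⁻¹ * z)) = 1) ↔ s = (1 - z)⁻¹ := by
                intro s
                constructor
                · intro h
                  by_cases hs : s = 1
                  · rw [hs] at h; simp at h
                  · have h1 : (1:F) - s ≠ 0 := sub_ne_zero.mpr (Ne.symm hs)
                    field_simp at h
                    have : s * (1 - z) = 1 := by linear_combination h
                    exact eq_inv_of_mul_eq_one_left (by linear_combination this)
                · rintro rfl
                  have h1 : (1:F) - (1 - z)⁻¹ ≠ 0 := by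
                    rw [sub_ne_zero]
                    intro h
                    have h2 : (1 : F) - z = 1 := by
                      rw [← inv_inv (1 - z), ← h, inv_one]
                    exact hz0 (by linear_combination -h2)
                  field_simp
                  rw [show (1:F) - z - 1 = -z by ring, div_neg, neg_neg, div_self hz0]
              simp_rw [hcond]
              rw [Finset.sum_eq_single ((1 - z)⁻¹)]
              · rw [if_pos rfl, ← MulChar.inv_apply', deltaF, if_neg hz0]
                ring
              · intro b _ hb
                rw [if_neg hb, mul_zero]
              · intro h; exact absurd (Finset.mem_univ _) h
  rw [key, inv_mul_cancel_left₀ hq]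
  ring

private lemma Su_eq (A B C χ : MulChar F ℂ) :
    ∑ u : F, B u * (B⁻¹ * C * A⁻¹ * χ⁻¹) (1 - u)
      = binom ((A * C⁻¹) * χ) ((A * B * C⁻¹) * χ) := by
  have hX : ((B⁻¹ * C * A⁻¹ * χ⁻¹) * B)⁻¹ = (A * C⁻¹) * χ := by
    apply Additive.ofMul.injective
    simp only [ofMul_mul, ofMul_inv]
    abel
  have hY : (A * B * C⁻¹ * χ)⁻¹ = B⁻¹ * C * A⁻¹ * χ⁻¹ := by
    apply Additive.ofMul.injective
    simp only [ofMul_mul, ofMul_inv]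
    abel
  have hval : (B⁻¹ * C * A⁻¹ * χ⁻¹) (-1) = ((A * B * C⁻¹) * χ) (-1) := by
    rw [← hY, MulChar.inv_apply']
    norm_num
  rw [jacobi_comm, jacobi_refl, jacobi_comm, hX, binom, hY, hval]

private lemma Sv_eq (B' C' χ : MulChar F ℂ) :
    ∑ v : F, (B' * χ) v * (B'⁻¹ * C') (1 - v)
      = (B' * C') (-1) * binom (B' * χ) (C' * χ) := by
  have hY : ((B' * χ) * (B'⁻¹ * C'))⁻¹ = (C' * χ)⁻¹ := by
    apply Additive.ofMul.injective
    simp only [ofMul_mul, ofMul_inv]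
    abel
  rw [jacobi_refl, hY, binom]
  have hC : C' (-1) * C' (-1) = 1 := by rw [← map_mul]; norm_num
  simp only [MulChar.mul_apply]
  linear_combination (-(B' (-1)) * χ (-1) * (∑ u : F, (B' u * χ u) * (C' * χ)⁻¹ (1 - u))) * hC

end Aux

/-- F₂ at `x = 1` reduces to a ₃F₂. -/
theorem appellF2_x_one {F : Type*} [Field F] [Fintype F]
    (A B B' C C' : MulChar F ℂ) (y : F) :
    appellF2 A B B' C C' 1 y =
      (B * C) (-1) * hyper3F2 A B' (A * C⁻¹) C' (A * B * C⁻¹) y := by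
  classical
  rcases eq_or_ne y 0 with rfl | hy
  · simp [appellF2, hyper3F2, MulChar.map_zero]
  have hyu : IsUnit y := isUnit_iff_ne_zero.mpr hy
  rw [appellF2, hyper3F2, show (1 : MulChar F ℂ) (1 * y) = 1 from by
    rw [one_mul]; exact MulChar.one_apply hyu, one_mul]
  set c : ℂ := ((Fintype.card F : ℂ) - 1)⁻¹ with hcdef
  set G : F → F → MulChar F ℂ → ℂ := fun u v χ =>
    binom (A * χ) χ * χ y * (B u * (B⁻¹ * C * A⁻¹ * χ⁻¹) (1 - u)) *
      ((B' * χ) v * (B'⁻¹ * C') (1 - v)) with hG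
  have key : ∀ u v : F,
      B u * B' v * (B⁻¹ * C) (1 - u) * (B'⁻¹ * C') (1 - v) * A⁻¹ (1 - u * 1 - v * y)
      = c * ∑ χ : MulChar F ℂ, G u v χ := by
    intro u v
    by_cases hu1 : u = 1
    · subst hu1
      simp [hG, MulChar.map_zero]
    by_cases hv0 : v = 0
    · subst hv0
      simp [hG, MulChar.map_zero]
    have hw : (1 : F) - u ≠ 0 := sub_ne_zero.mpr (Ne.symm hu1)
    have hz : v * (y * (1 - u)⁻¹) ≠ 0 :=
      mul_ne_zero hv0 (mul_ne_zero hy (inv_ne_zero hw))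
    have hδ : deltaF (v * (y * (1 - u)⁻¹)) = 0 := by rw [deltaF, if_neg hz]
    have hsplit : (1 : F) - u * 1 - v * y = (1 - u) * (1 - v * (y * (1 - u)⁻¹)) := by
      field_simp
    have hA : A⁻¹ (1 - u * 1 - v * y)
        = c * ∑ χ : MulChar F ℂ,
            A⁻¹ (1 - u) * (binom (A * χ) χ * χ (v * (y * (1 - u)⁻¹))) := by
      rw [hsplit, map_mul, greene A (v * (y * (1 - u)⁻¹)), hδ, zero_add,
        mul_left_comm, Finset.mul_sum]
    rw [hA, mul_left_comm, Finset.mul_sum]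
    congr 1
    refine Finset.sum_congr rfl fun χ _ => ?_
    simp only [hG, MulChar.mul_apply, MulChar.inv_apply', map_mul]
    ring
  have swap : ∑ u : F, ∑ v : F, ∑ χ : MulChar F ℂ, G u v χ
      = ∑ χ : MulChar F ℂ, ∑ u : F, ∑ v : F, G u v χ := by
    calc ∑ u : F, ∑ v : F, ∑ χ : MulChar F ℂ, G u v χ
        = ∑ u : F, ∑ χ : MulChar F ℂ, ∑ v : F, G u v χ :=
          Finset.sum_congr rfl fun u _ => Finset.sum_comm
      _ = ∑ χ : MulChar F ℂ, ∑ u : F, ∑ v : F, G u v χ := Finset.sum_comm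
  have factored : ∀ χ : MulChar F ℂ, ∑ u : F, ∑ v : F, G u v χ
      = binom (A * χ) χ * χ y * (∑ u : F, B u * (B⁻¹ * C * A⁻¹ * χ⁻¹) (1 - u)) *
        (∑ v : F, (B' * χ) v * (B'⁻¹ * C') (1 - v)) := by
    intro χ
    rw [mul_assoc, Finset.sum_mul_sum, Finset.mul_sum]
    refine Finset.sum_congr rfl fun u _ => ?_
    rw [Finset.mul_sum]
    exact Finset.sum_congr rfl fun v _ => by simp only [hG]; ring
  calc (B * B' * C * C') (-1) *
      ∑ u : F, ∑ v : F,
        B u * B' v * (B⁻¹ * C) (1 - u) * (B'⁻¹ * C') (1 - v) * A⁻¹ (1 - u * 1 - v * y)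
      = (B * B' * C * C') (-1) * ∑ u : F, ∑ v : F, c * ∑ χ : MulChar F ℂ, G u v χ := by
        rw [Finset.sum_congr rfl fun u _ => Finset.sum_congr rfl fun v _ => key u v]
    _ = (B * B' * C * C') (-1) * (c * ∑ χ : MulChar F ℂ, ∑ u : F, ∑ v : F, G u v χ) := by
        simp_rw [← Finset.mul_sum]
        rw [swap]
    _ = c * ∑ χ : MulChar F ℂ, (B * B' * C * C') (-1) *
          (binom (A * χ) χ * χ y * binom ((A * C⁻¹) * χ) ((A * B * C⁻¹) * χ) *
            ((B' * C') (-1) * binom (B' * χ) (C' * χ))) := by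
        rw [mul_left_comm, Finset.mul_sum]
        congr 1
        refine Finset.sum_congr rfl fun χ _ => ?_
        rw [factored χ, Su_eq, Sv_eq]
    _ = (B * C) (-1) *
        (c * ∑ χ : MulChar F ℂ,
          binom (A * χ) χ * binom (B' * χ) (C' * χ) *
            binom ((A * C⁻¹) * χ) ((A * B * C⁻¹) * χ) * χ y) := by
        conv_rhs => rw [mul_left_comm ((B * C) (-1)) c, Finset.mul_sum]
        congr 1
        refine Finset.sum_congr rfl fun χ _ => ?_
        have hB' : B' (-1) * B' (-1) = 1 := by rw [← map_mul]; norm_num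
        have hC' : C' (-1) * C' (-1) = 1 := by rw [← map_mul]; norm_num
        simp only [MulChar.mul_apply]
        linear_combination
          (B (-1) * C (-1) * B' (-1) * B' (-1) *
            (binom (A * χ) χ * χ y * binom ((A * C⁻¹) * χ) ((A * B * C⁻¹) * χ) *
              binom (B' * χ) (C' * χ))) * hC' +
          (B (-1) * C (-1) *
            (binom (A * χ) χ * χ y * binom ((A * C⁻¹) * χ) ((A * B * C⁻¹) * χ) *
              binom (B' * χ) (C' * χ))) * hB'
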